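/- Let G be a unipolar graph with clique split H, H_1, …, H_k. Then every induced chordless cycle of G on at least four vertices is contained in H ∪ H_i for some i, and in fact has exactly two vertices in H and exactly two vertices in H_i. -/

import Mathlib

/-- A clique split of a graph `G`: the vertex set is partitioned into a center clique `H`
and peripheral cliques `P 0, …, P (k-1)` with no edges between distinct peripheral cliques. -/
structure IsCliqueSplit {V : Type*} (G : SimpleGraph V) (H : Set V) {k : ℕ}
    (P : Fin k → Set V) : Prop where
  center_clique : G.IsClique H
  periph_clique : ∀ i, G.IsClique (P i)
  center_disj : ∀ i, Disjoint H (P i)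
  periph_disj : ∀ i j, i ≠ j → Disjoint (P i) (P j)
  covers : H ∪ (⋃ i, P i) = Set.univ
  no_cross : ∀ i j, i ≠ j → ∀ u ∈ P i, ∀ v ∈ P j, ¬ G.Adj u v

/-- A graph is unipolar if it admits a clique split. -/
def Unipolar {V : Type*} (G : SimpleGraph V) : Prop :=
  ∃ (H : Set V) (k : ℕ) (P : Fin k → Set V), IsCliqueSplit G H P
/-- Let `G` be unipolar with clique split `H, P 0, …, P (k-1)`. Then every induced
chordless cycle of `G` on at least four vertices is contained in `H ∪ P i` for some `i`,
and in fact has exactly two vertices in `H` and exactly two vertices in `P i`. -/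
theorem unipolar_induced_cycle_two_two {V : Type*} (G : SimpleGraph V)
    (H : Set V) {k : ℕ} (P : Fin k → Set V) (hsplit : IsCliqueSplit G H P)
    (n : ℕ) (hn : 4 ≤ n) (f : SimpleGraph.cycleGraph n ↪g G) :
    ∃ i : Fin k, Set.range f ⊆ H ∪ P i ∧
      (Set.range f ∩ H).ncard = 2 ∧ (Set.range f ∩ P i).ncard = 2 := by
  haveI : NeZero n := ⟨by omega⟩
  letI : CommRing (Fin n) := Fin.instCommRing n
  have hinj : Function.Injective f := f.injective
  -- `val` of small numerals
  have v1 : (1 : Fin n).val = 1 := by rw [Fin.val_one', Nat.mod_eq_of_lt (by omega)]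
  have v2 : (2 : Fin n).val = 2 := by
    have h : (2 : Fin n) = ((2 : ℕ) : Fin n) := by norm_cast
    rw [h, Fin.val_natCast, Nat.mod_eq_of_lt (by omega)]
  have v3 : (3 : Fin n).val = 3 := by
    have h : (3 : Fin n) = ((3 : ℕ) : Fin n) := by norm_cast
    rw [h, Fin.val_natCast, Nat.mod_eq_of_lt (by omega)]
  have natne : ∀ m : ℕ, 0 < m → m < n → ((m : ℕ) : Fin n) ≠ 0 := by
    intro m h1 h2 h
    rw [Fin.ext_iff, Fin.val_natCast, Nat.mod_eq_of_lt h2] at h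
    simp at h; omega
  -- distinctness of shifted vertices
  have d01 : ∀ x : Fin n, x ≠ x + 1 := by
    intro x h; exact natne 1 (by omega) (by omega) (by push_cast; linear_combination -h)
  have d12 : ∀ x : Fin n, x + 1 ≠ x + 2 := by
    intro x h; exact natne 1 (by omega) (by omega) (by push_cast; linear_combination -h)
  have d02 : ∀ x : Fin n, x ≠ x + 2 := by
    intro x h; exact natne 2 (by omega) (by omega) (by push_cast; linear_combination -h)
  have d13 : ∀ x : Fin n, x + 1 ≠ x + 3 := by
    intro x h; exact natne 2 (by omega) (by omega) (by push_cast; linear_combination -h)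
  have d03 : ∀ x : Fin n, x ≠ x + 3 := by
    intro x h; exact natne 3 (by omega) (by omega) (by push_cast; linear_combination -h)
  have d23 : ∀ x : Fin n, x + 2 ≠ x + 3 := by
    intro x h; exact natne 1 (by omega) (by omega) (by push_cast; linear_combination -h)
  -- adjacency facts in the cycle graph
  have hstep : ∀ x : Fin n, (SimpleGraph.cycleGraph n).Adj x (x + 1) := by
    intro x
    rw [SimpleGraph.cycleGraph_adj']
    right; rw [show x + 1 - x = 1 by ring, v1]
  have hD : ∀ x y : Fin n, (SimpleGraph.cycleGraph n).Adj x y →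
      x - y = 1 ∨ x - y = -1 := by
    intro x y h
    rw [SimpleGraph.cycleGraph_adj'] at h
    rcases h with h | h
    · left; exact Fin.ext (by rw [h, v1])
    · right
      have h' : y - x = 1 := Fin.ext (by rw [h, v1])
      linear_combination -h'
  have no_three : ∀ x y z : Fin n, (SimpleGraph.cycleGraph n).Adj x y →
      (SimpleGraph.cycleGraph n).Adj y z → (SimpleGraph.cycleGraph n).Adj x z → False := by
    intro x y z h1 h2 h3
    have key : x - y + (y - z) - (x - z) = 0 := by ring
    rcases hD x y h1 with d1 | d1 <;> rcases hD y z h2 with d2 | d2 <;>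
      rcases hD x z h3 with d3 | d3 <;> rw [d1, d2, d3] at key <;>
      first
        | exact natne 1 (by omega) (by omega) (by push_cast; linear_combination key)
        | exact natne 3 (by omega) (by omega) (by push_cast; linear_combination key)
        | exact natne 1 (by omega) (by omega) (by push_cast; linear_combination -key)
        | exact natne 3 (by omega) (by omega) (by push_cast; linear_combination -key)
  -- no clique contains three vertices of the cycle
  have clique3 : ∀ C : Set V, G.IsClique C → ∀ x y z : Fin n, x ≠ y → y ≠ z → x ≠ z →
      f x ∈ C → f y ∈ C → f z ∈ C → False := by
    intro C hC x y z hxy hyz hxz mx my mz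
    exact no_three x y z (f.map_adj_iff.mp (hC mx my (hinj.ne hxy)))
      (f.map_adj_iff.mp (hC my mz (hinj.ne hyz)))
      (f.map_adj_iff.mp (hC mx mz (hinj.ne hxz)))
  have pidx : ∀ x : Fin n, f x ∉ H → ∃ i, f x ∈ P i := by
    intro x hx
    have hmem : f x ∈ H ∪ ⋃ i, P i := by rw [hsplit.covers]; exact Set.mem_univ _
    rcases hmem with h | h
    · exact absurd h hx
    · exact Set.mem_iUnion.mp h
  have same : ∀ x : Fin n, ∀ i j, f x ∈ P i → f (x + 1) ∈ P j → i = j := by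
    intro x i j hi hj
    by_contra hne
    exact hsplit.no_cross i j hne _ hi _ hj (f.map_adj_iff.mpr (hstep x))
  -- no three consecutive vertices outside H
  have no3 : ∀ x : Fin n, f x ∉ H → f (x + 1) ∉ H → f (x + 2) ∉ H → False := by
    intro x h0 h1 h2
    obtain ⟨i, hi⟩ := pidx x h0
    obtain ⟨j, hj⟩ := pidx (x + 1) h1
    obtain ⟨l, hl⟩ := pidx (x + 2) h2
    have hji : j = i := (same x i j hi hj).symm
    have hlj : l = j := by
      refine (same (x + 1) j l hj ?_).symm
      rw [show x + 1 + 1 = x + 2 by ring]; exact hl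
    subst hji; subst hlj
    exact clique3 (P l) (hsplit.periph_clique l) x (x + 1) (x + 2)
      (d01 x) (d12 x) (d02 x) hi hj hl
  -- find two consecutive vertices in H
  obtain ⟨a, ha, ha1⟩ : ∃ a : Fin n, f a ∈ H ∧ f (a + 1) ∈ H := by
    by_contra hno
    push_neg at hno
    by_cases hex : ∃ a : Fin n, f a ∈ H
    · obtain ⟨a, ha⟩ := hex
      have h1' : f (a + 1) ∉ H := hno a ha
      have h2' : f (a + 2) ∉ H := by
        intro h
        have hadj2 : (SimpleGraph.cycleGraph n).Adj a (a + 2) :=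
          f.map_adj_iff.mp (hsplit.center_clique ha h (hinj.ne (d02 a)))
        rcases hD a (a + 2) hadj2 with h' | h'
        · exact natne 3 (by omega) (by omega) (by push_cast; linear_combination -h')
        · exact natne 1 (by omega) (by omega) (by push_cast; linear_combination -h')
      have h3' : f (a + 3) ∉ H := by
        intro h
        have hadj3 : (SimpleGraph.cycleGraph n).Adj a (a + 3) :=
          f.map_adj_iff.mp (hsplit.center_clique ha h (hinj.ne (d03 a)))
        rcases hD a (a + 3) hadj3 with h' | h'
        · -- a - (a+3) = 1, i.e. a + 3 + 1 = a, so `a` follows `a+3` on the cycle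
          have h4 : a + 3 + 1 = a := by linear_combination -h'
          exact hno (a + 3) h (by rw [h4]; exact ha)
        · exact natne 2 (by omega) (by omega) (by push_cast; linear_combination -h')
      exact no3 (a + 1) h1' (by rw [show a + 1 + 1 = a + 2 by ring]; exact h2')
        (by rw [show a + 1 + 2 = a + 3 by ring]; exact h3')
    · push_neg at hex
      exact no3 0 (hex 0) (hex _) (hex _)
  -- the two other vertices are outside H
  have hA2 : f (a + 2) ∉ H := fun h =>
    clique3 H hsplit.center_clique a (a + 1) (a + 2) (d01 a) (d12 a) (d02 a) ha ha1 h
  have hA3 : f (a + 3) ∉ H := fun h =>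
    clique3 H hsplit.center_clique a (a + 1) (a + 3) (d01 a) (d13 a) (d03 a) ha ha1 h
  -- the cycle has exactly four vertices
  have hn4 : n = 4 := by
    by_contra h5
    have hn5 : 5 ≤ n := by omega
    have hA4 : f (a + 4) ∉ H := by
      intro h
      have d14 : a + 1 ≠ a + 4 := by
        intro h'; exact natne 3 (by omega) (by omega) (by push_cast; linear_combination -h')
      have d04 : a ≠ a + 4 := by
        intro h'; exact natne 4 (by omega) (by omega) (by push_cast; linear_combination -h')
      exact clique3 H hsplit.center_clique a (a + 1) (a + 4) (d01 a) d14 d04 ha ha1 h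
    exact no3 (a + 2) hA2 (by rw [show a + 2 + 1 = a + 3 by ring]; exact hA3)
      (by rw [show a + 2 + 2 = a + 4 by ring]; exact hA4)
  -- every vertex of the cycle is one of a, a+1, a+2, a+3
  have huniv : ∀ x : Fin n, x = a ∨ x = a + 1 ∨ x = a + 2 ∨ x = a + 3 := by
    intro x
    have hx : x = a + (x - a) := by ring
    have hlt := (x - a).isLt
    have hv : (x - a).val = 0 ∨ (x - a).val = 1 ∨ (x - a).val = 2 ∨ (x - a).val = 3 := by
      omega
    rcases hv with h | h | h | h
    · left; rw [hx, show x - a = 0 from Fin.ext (by rw [h]; simp), add_zero]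
    · right; left; rw [hx]; congr 1; exact Fin.ext (by rw [h, v1])
    · right; right; left; rw [hx]; congr 1; exact Fin.ext (by rw [h, v2])
    · right; right; right; rw [hx]; congr 1; exact Fin.ext (by rw [h, v3])
  -- the peripheral clique containing the other two vertices
  obtain ⟨i, hi⟩ := pidx (a + 2) hA2
  obtain ⟨j, hj⟩ := pidx (a + 3) hA3
  have hji : j = i := by
    refine (same (a + 2) i j hi ?_).symm
    rw [show a + 2 + 1 = a + 3 by ring]; exact hj
  subst hji
  refine ⟨j, ?_, ?_, ?_⟩
  · rintro v ⟨x, rfl⟩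
    rcases huniv x with h | h | h | h <;> subst h
    · exact Or.inl ha
    · exact Or.inl ha1
    · exact Or.inr hi
    · exact Or.inr hj
  · have hset : Set.range f ∩ H = {f a, f (a + 1)} := by
      apply Set.Subset.antisymm
      · rintro v ⟨⟨x, rfl⟩, hv⟩
        rcases huniv x with h | h | h | h <;> subst h
        · exact Or.inl rfl
        · exact Or.inr rfl
        · exact absurd hv hA2
        · exact absurd hv hA3
      · rintro v (rfl | rfl)
        · exact ⟨⟨a, rfl⟩, ha⟩
        · exact ⟨⟨a + 1, rfl⟩, ha1⟩
    rw [hset]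
    exact Set.ncard_pair (hinj.ne (d01 a))
  · have hset : Set.range f ∩ P j = {f (a + 2), f (a + 3)} := by
      apply Set.Subset.antisymm
      · rintro v ⟨⟨x, rfl⟩, hv⟩
        rcases huniv x with h | h | h | h <;> subst h
        · exact absurd hv (Set.disjoint_left.mp (hsplit.center_disj j) ha)
        · exact absurd hv (Set.disjoint_left.mp (hsplit.center_disj j) ha1)
        · exact Or.inl rfl
        · exact Or.inr rfl
      · rintro v (rfl | rfl)
        · exact ⟨⟨a + 2, rfl⟩, hi⟩
        · exact ⟨⟨a + 3, rfl⟩, hj⟩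
    rw [hset]
    exact Set.ncard_pair (hinj.ne (d23 a))
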